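/- Let K ≥ 2, N ≥ 2, T ≥ 1 be integers and let (X_{j,t}) for j ∈ {0,…,N−1}, t ∈ {0,…,T−1} be mutually independent random variables, each uniformly distributed on a set of K arms. Let C be the number of pairs (j,t) such that there exists j' ≠ j with X_{j',t} = X_{j,t}. Then E[C] = N·T·(1 − (1 − 1/K)^{N−1}) ≥ N·T/K. -/

import Mathlib

open MeasureTheory ProbabilityTheory
open scoped ENNReal

/-- Collision count of the Musical Chairs learning phase: each of `N` players
selects, in each of `T` rounds, an arm independently and uniformly at random
from `K` arms; `C ω` counts the pairs `(j,t)` for which some other player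
`j' ≠ j` selects the same arm as player `j` in round `t`.  Then
`E[C] = N·T·(1 − (1 − 1/K)^{N−1}) ≥ N·T/K`. -/
theorem stmt_10 {Ω : Type*} [MeasurableSpace Ω] (μ : Measure Ω)
    [IsProbabilityMeasure μ]
    (K N T : ℕ) (hK : 2 ≤ K) (hN : 2 ≤ N) (hT : 1 ≤ T)
    (X : Fin N × Fin T → Ω → Fin K) (hmeas : ∀ p, Measurable (X p))
    (hindep : iIndepFun X μ)
    (hunif : ∀ p a, μ {ω | X p ω = a} = 1 / K) :
    (∫ ω, ((Finset.univ.filter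
        (fun p : Fin N × Fin T =>
          ∃ j' : Fin N, j' ≠ p.1 ∧ X (j', p.2) ω = X p ω)).card : ℝ) ∂μ) =
      (N : ℝ) * (T : ℝ) * (1 - (1 - 1 / (K : ℝ)) ^ (N - 1)) ∧
    (N : ℝ) * (T : ℝ) * (1 - (1 - 1 / (K : ℝ)) ^ (N - 1)) ≥
      (N : ℝ) * (T : ℝ) / (K : ℝ) := by
  have hK0 : (K : ℝ≥0∞) ≠ 0 := by
    exact_mod_cast Nat.cast_ne_zero.mpr (by omega)
  have hKtop : (K : ℝ≥0∞) ≠ ∞ := ENNReal.natCast_ne_top K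
  have hK1 : (1 : ℝ≥0∞) ≤ (K : ℝ≥0∞) := by exact_mod_cast (by omega : 1 ≤ K)
  set pK : ℝ≥0∞ := 1 / (K : ℝ≥0∞) with hpKdef
  have hpK1 : pK ≤ 1 := by
    rw [hpKdef, one_div]; exact ENNReal.inv_le_one.mpr hK1
  set c : ℝ≥0∞ := (1 - pK) ^ (N - 1) with hcdef
  have hc1 : c ≤ 1 := pow_le_one₀ zero_le tsub_le_self
  set E : Fin N × Fin T → Set Ω :=
    fun q => {ω | ∃ j' : Fin N, j' ≠ q.1 ∧ X (j', q.2) ω = X q ω} with hEdef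
  have hEmeas : ∀ q, MeasurableSet (E q) := by
    intro q
    have : E q = ⋃ j' : Fin N, ⋃ _ : j' ≠ q.1, {ω | X (j', q.2) ω = X q ω} := by
      ext ω; simp [hEdef]
    rw [this]
    exact MeasurableSet.iUnion fun j' => MeasurableSet.iUnion fun _ =>
      measurableSet_eq_fun (hmeas _) (hmeas _)
  -- the probability of each collision event
  have hprob : ∀ q, μ (E q) = 1 - c := by
    intro q
    set S : Finset (Fin N × Fin T) :=
      Finset.univ.image (fun j' : Fin N => (j', q.2)) with hSdef
    have hqS : q ∈ S := by
      rw [hSdef]; exact Finset.mem_image.mpr ⟨q.1, Finset.mem_univ _, rfl⟩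
    have hinj : Function.Injective (fun j' : Fin N => (j', q.2)) := by
      intro a b h; simpa using congrArg Prod.fst h
    set sets : Fin K → Fin N × Fin T → Set (Fin K) :=
      fun a i => if i.1 = q.1 then {a} else {a}ᶜ with hsetsdef
    set A : Fin K → Set Ω := fun a => ⋂ i ∈ S, X i ⁻¹' sets a i with hAdef
    have hmemA : ∀ a ω, ω ∈ A a ↔ ∀ j' : Fin N, X (j', q.2) ω ∈ sets a (j', q.2) := by
      intro a ω
      simp only [hAdef, Set.mem_iInter, hSdef, Finset.mem_image]
      constructor
      · intro h j'; exact h _ ⟨j', Finset.mem_univ _, rfl⟩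
      · rintro h i ⟨j', -, rfl⟩; exact h j'
    have hXq : ∀ a ω, ω ∈ A a → X q ω = a := by
      intro a ω h
      have := (hmemA a ω).mp h q.1
      simp only [hsetsdef, if_pos rfl, Set.mem_singleton_iff] at this
      rwa [Prod.mk.eta] at this
    have hcompl : (E q)ᶜ = ⋃ a : Fin K, A a := by
      ext ω
      simp only [Set.mem_compl_iff, hEdef, Set.mem_setOf_eq, not_exists, not_and,
        Set.mem_iUnion]
      constructor
      · intro h
        refine ⟨X q ω, (hmemA _ ω).mpr fun j' => ?_⟩
        by_cases hj : j' = q.1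
        · simp only [hsetsdef, if_pos hj, Set.mem_singleton_iff]
          rw [hj, Prod.mk.eta]
        · simp only [hsetsdef, if_neg hj, Set.mem_compl_iff, Set.mem_singleton_iff]
          exact h j' hj
      · rintro ⟨a, ha⟩ j' hj heq
        have h1 := hXq a ω ha
        have h2 := (hmemA a ω).mp ha j'
        simp only [hsetsdef, if_neg hj, Set.mem_compl_iff, Set.mem_singleton_iff] at h2
        exact h2 (heq.trans h1)
    have hAmeas : ∀ a, MeasurableSet (A a) := by
      intro a
      exact MeasurableSet.biInter (Finset.countable_toSet S) fun i _ =>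
        (hmeas i) (by exact MeasurableSet.of_discrete)
    have hAdisj : Pairwise (Function.onFun Disjoint A) := by
      intro a b hab
      rw [Function.onFun, Set.disjoint_left]
      intro ω ha hb
      exact hab ((hXq a ω ha).symm.trans (hXq b ω hb))
    have hAval : ∀ a, μ (A a) = pK * (1 - pK) ^ (N - 1) := by
      intro a
      have := hindep.measure_inter_preimage_eq_mul S
        (sets := sets a) (fun i _ => MeasurableSet.of_discrete)
      rw [hAdef]
      rw [this, hSdef, Finset.prod_image (fun x _ y _ h => hinj h)]
      have hval : ∀ j' : Fin N,
          μ (X (j', q.2) ⁻¹' sets a (j', q.2)) =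
            if j' = q.1 then pK else 1 - pK := by
        intro j'
        by_cases hj : j' = q.1
        · simp only [hsetsdef, if_pos hj]
          have : X (j', q.2) ⁻¹' {a} = {ω | X (j', q.2) ω = a} := rfl
          rw [this, hunif, hpKdef]
        · simp only [hsetsdef, if_neg hj]
          have : X (j', q.2) ⁻¹' {a}ᶜ = {ω | X (j', q.2) ω = a}ᶜ := rfl
          rw [this, prob_compl_eq_one_sub, hunif, hpKdef]
          exact measurableSet_eq_fun (hmeas _) measurable_const
      rw [Finset.prod_congr rfl fun j' _ => hval j']
      rw [← Finset.mul_prod_erase Finset.univ _ (Finset.mem_univ q.1), if_pos rfl]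
      congr 1
      rw [Finset.prod_congr rfl (fun j' hj => if_neg (Finset.ne_of_mem_erase hj)),
        Finset.prod_const, Finset.card_erase_of_mem (Finset.mem_univ _),
        Finset.card_univ, Fintype.card_fin]
    have hEc : μ (E q)ᶜ = c := by
      rw [hcompl, measure_iUnion hAdisj hAmeas]
      rw [tsum_fintype]
      simp only [hAval]
      rw [Finset.sum_const, Finset.card_univ, Fintype.card_fin, nsmul_eq_mul,
        hpKdef, hcdef]
      rw [← mul_assoc, mul_one_div, ENNReal.div_self hK0 hKtop, one_mul]
    rw [prob_compl_eq_one_sub (hEmeas q)] at hEc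
    rw [← hEc, ENNReal.sub_sub_cancel ENNReal.one_ne_top prob_le_one]
  -- real-valued constants
  have hpKr : ((1 : ℝ≥0∞) - pK).toReal = 1 - 1 / (K : ℝ) := by
    rw [ENNReal.toReal_sub_of_le hpK1 ENNReal.one_ne_top, ENNReal.toReal_one,
      hpKdef, ENNReal.toReal_div, ENNReal.toReal_one]
    simp
  have hcr : c.toReal = (1 - 1 / (K : ℝ)) ^ (N - 1) := by
    rw [hcdef, ENNReal.toReal_pow, hpKr]
  have hEr : ∀ q, (μ (E q)).toReal = 1 - (1 - 1 / (K : ℝ)) ^ (N - 1) := by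
    intro q
    rw [hprob q, ENNReal.toReal_sub_of_le hc1 ENNReal.one_ne_top,
      ENNReal.toReal_one, hcr]
  constructor
  · -- compute the integral
    have hrw : ∀ ω, ((Finset.univ.filter
        (fun p : Fin N × Fin T =>
          ∃ j' : Fin N, j' ≠ p.1 ∧ X (j', p.2) ω = X p ω)).card : ℝ) =
        ∑ q : Fin N × Fin T, Set.indicator (E q) (fun _ => (1 : ℝ)) ω := by
      intro ω
      rw [Finset.card_filter]
      push_cast
      refine Finset.sum_congr rfl fun q _ => ?_
      by_cases h : ∃ j' : Fin N, j' ≠ q.1 ∧ X (j', q.2) ω = X q ω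
      · rw [if_pos h, Set.indicator_of_mem (by exact h)]
      · rw [if_neg h, Set.indicator_of_notMem (by exact h)]
    calc (∫ ω, ((Finset.univ.filter
        (fun p : Fin N × Fin T =>
          ∃ j' : Fin N, j' ≠ p.1 ∧ X (j', p.2) ω = X p ω)).card : ℝ) ∂μ)
        = ∫ ω, ∑ q : Fin N × Fin T, Set.indicator (E q) (fun _ => (1 : ℝ)) ω ∂μ := by
          exact integral_congr_ae (Filter.Eventually.of_forall hrw)
      _ = ∑ q : Fin N × Fin T, ∫ ω, Set.indicator (E q) (fun _ => (1 : ℝ)) ω ∂μ := by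
          refine integral_finset_sum _ fun q _ => ?_
          exact (integrable_const (1 : ℝ)).indicator (hEmeas q)
      _ = ∑ q : Fin N × Fin T, (μ (E q)).toReal := by
          refine Finset.sum_congr rfl fun q _ => ?_
          rw [integral_indicator_const _ (hEmeas q), smul_eq_mul, mul_one]; rfl
      _ = (N : ℝ) * (T : ℝ) * (1 - (1 - 1 / (K : ℝ)) ^ (N - 1)) := by
          simp only [hEr]
          rw [Finset.sum_const, Finset.card_univ, Fintype.card_prod,
            Fintype.card_fin, Fintype.card_fin, nsmul_eq_mul]
          push_cast
          ring
  · -- the inequality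
    have hKr1 : 1 / (K : ℝ) ≤ 1 := by
      rw [div_le_one (by positivity)]
      exact_mod_cast (by omega : 1 ≤ K)
    have h0 : (0 : ℝ) ≤ 1 - 1 / (K : ℝ) := by linarith
    have hK0r : (0 : ℝ) ≤ 1 / (K : ℝ) := by positivity
    have h1 : (1 : ℝ) - 1 / (K : ℝ) ≤ 1 := by linarith
    have hpow : (1 - 1 / (K : ℝ)) ^ (N - 1) ≤ 1 - 1 / (K : ℝ) :=
      pow_le_of_le_one h0 h1 (by omega)
    have hNT : (0 : ℝ) ≤ (N : ℝ) * (T : ℝ) := by positivity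
    have : (1 : ℝ) / (K : ℝ) ≤ 1 - (1 - 1 / (K : ℝ)) ^ (N - 1) := by linarith
    calc (N : ℝ) * (T : ℝ) / (K : ℝ) = (N : ℝ) * (T : ℝ) * (1 / (K : ℝ)) := by ring
      _ ≤ (N : ℝ) * (T : ℝ) * (1 - (1 - 1 / (K : ℝ)) ^ (N - 1)) :=
          mul_le_mul_of_nonneg_left this hNT
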